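/- The series ∑_{b ≥ 1} χ(b)/φ(b), summed over all positive integers b, converges, and its value c₁ satisfies c₁ = L(1, χ) · ∏_p ( 1 + χ(p)/(p(p−1)) ), where L(s, χ) is the Dirichlet L-function of χ and the product runs over all primes p (and converges). -/

import Mathlib

open Filter

noncomputable section

/-- The nontrivial Dirichlet character of conductor 4. -/
def chi (n : ℕ) : ℝ := if n % 4 = 1 then 1 else if n % 4 = 3 then -1 else 0

lemma chi_zero : chi 0 = 0 := by simp [chi]

lemma chi_one : chi 1 = 1 := by simp [chi]

lemma chi_mul (a b : ℕ) : chi (a * b) = chi a * chi b := by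
  have ha : a % 4 = 0 ∨ a % 4 = 1 ∨ a % 4 = 2 ∨ a % 4 = 3 := by omega
  have hb : b % 4 = 0 ∨ b % 4 = 1 ∨ b % 4 = 2 ∨ b % 4 = 3 := by omega
  have hab : a * b % 4 = a % 4 * (b % 4) % 4 := Nat.mul_mod a b 4
  unfold chi
  rcases ha with h1 | h1 | h1 | h1 <;> rcases hb with h2 | h2 | h2 | h2 <;>
    rw [hab, h1, h2] <;> norm_num

lemma chi_abs_le (n : ℕ) : |chi n| ≤ 1 := by
  unfold chi; split <;> [skip; split] <;> norm_num

/-- The multiplicative coefficient function `μ(d)² χ(d) / (d φ(d))`. -/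
def gg (d : ℕ) : ℝ :=
  ((ArithmeticFunction.moebius d : ℤ) : ℝ) ^ 2 * chi d / (d * Nat.totient d)

lemma gg_zero : gg 0 = 0 := by simp [gg]

lemma gg_one : gg 1 = 1 := by simp [gg, chi_one]

lemma gg_mul {m n : ℕ} (h : Nat.Coprime m n) : gg (m * n) = gg m * gg n := by
  have hμ := ArithmeticFunction.isMultiplicative_moebius.map_mul_of_coprime h
  have hφ := Nat.totient_mul h
  unfold gg
  rw [hμ, hφ, chi_mul]
  push_cast
  ring

lemma totient_aux : ∀ n : ℕ, (Odd n → n ≤ Nat.totient n ^ 2) ∧ n ≤ 2 * Nat.totient n ^ 2 := by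
  intro n
  induction n using Nat.recOnPosPrimePosCoprime with
  | prime_pow p k hp hk =>
    have hp' : p.Prime := hp
    have hφ : Nat.totient (p ^ k) = p ^ (k - 1) * (p - 1) := Nat.totient_prime_pow hp' hk
    rcases eq_or_ne p 2 with rfl | hodd
    · constructor
      · intro h
        exact absurd h (Nat.not_odd_iff_even.mpr ((Nat.even_pow).mpr ⟨even_two, hk.ne'⟩))
      · rw [hφ]
        have : 2 * (2 ^ (k - 1) * (2 - 1)) ^ 2 = 2 ^ (2 * k - 1) := by
          rw [Nat.mul_pow]
          have h1 : ((2:ℕ) - 1) ^ 2 = 1 := by norm_num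
          rw [h1, mul_one, ← pow_mul, ← pow_succ']
          congr 1
          omega
        rw [this]
        exact Nat.pow_le_pow_right (by norm_num) (by omega)
    · have hp3 : 3 ≤ p := by have := hp'.two_le; omega
      have hfirst : p ^ k ≤ Nat.totient (p ^ k) ^ 2 := by
        rw [hφ, Nat.mul_pow]
        have hsq : p ≤ (p - 1) ^ 2 := by
          have h1 : p - 1 + 1 = p := by omega
          nlinarith [h1]
        calc p ^ k = p ^ (k - 1) * p := by rw [← pow_succ]; congr 1; omega
          _ ≤ p ^ (k - 1) * (p - 1) ^ 2 := Nat.mul_le_mul_left _ hsq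
          _ ≤ (p ^ (k - 1)) ^ 2 * (p - 1) ^ 2 := by
              apply Nat.mul_le_mul_right
              exact Nat.le_self_pow (by norm_num) _
      exact ⟨fun _ => hfirst, hfirst.trans (by omega)⟩
  | zero => simp
  | one => simp
  | coprime a b ha hb hab iha ihb =>
    have hφ : Nat.totient (a * b) = Nat.totient a * Nat.totient b := Nat.totient_mul hab
    have hodd : Odd (a * b) → a * b ≤ Nat.totient (a * b) ^ 2 := by
      intro h
      rw [Nat.odd_mul] at h
      rw [hφ, Nat.mul_pow]
      exact Nat.mul_le_mul (iha.1 h.1) (ihb.1 h.2)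
    refine ⟨hodd, ?_⟩
    rcases Nat.even_or_odd a with hea | hoa
    · have hob : Odd b := by
        rcases Nat.even_or_odd b with heb | hob
        · exfalso
          have h2 : (2:ℕ) ∣ Nat.gcd a b := Nat.dvd_gcd hea.two_dvd heb.two_dvd
          rw [Nat.Coprime] at hab
          omega
        · exact hob
      calc a * b ≤ (2 * Nat.totient a ^ 2) * Nat.totient b ^ 2 :=
            Nat.mul_le_mul iha.2 (ihb.1 hob)
        _ = 2 * Nat.totient (a * b) ^ 2 := by rw [hφ, Nat.mul_pow]; ring
    · rcases Nat.even_or_odd b with heb | hob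
      · calc a * b ≤ Nat.totient a ^ 2 * (2 * Nat.totient b ^ 2) :=
              Nat.mul_le_mul (iha.1 hoa) ihb.2
          _ = 2 * Nat.totient (a * b) ^ 2 := by rw [hφ, Nat.mul_pow]; ring
      · have := hodd (Nat.odd_mul.mpr ⟨hoa, hob⟩)
        omega

lemma nat_le_two_totient_sq (n : ℕ) : n ≤ 2 * Nat.totient n ^ 2 := (totient_aux n).2

lemma gg_norm_le (d : ℕ) (hd : d ≠ 0) : ‖gg d‖ ≤ 1 / ((d : ℝ) * Nat.totient d) := by
  have hφ : 0 < Nat.totient d := Nat.totient_pos.mpr (Nat.pos_of_ne_zero hd)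
  have hden : (0 : ℝ) < (d : ℝ) * Nat.totient d := by positivity
  have hnum : |((ArithmeticFunction.moebius d : ℤ) : ℝ) ^ 2 * chi d| ≤ 1 := by
    have h1 : |((ArithmeticFunction.moebius d : ℤ) : ℝ)| ≤ 1 := by
      exact_mod_cast (by exact_mod_cast ArithmeticFunction.abs_moebius_le_one :
        |((ArithmeticFunction.moebius d : ℤ) : ℝ)| ≤ (1 : ℝ))
    have h2 := chi_abs_le d
    rw [abs_mul, abs_pow]
    nlinarith [abs_nonneg ((ArithmeticFunction.moebius d : ℤ) : ℝ), abs_nonneg (chi d)]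
  rw [gg, Real.norm_eq_abs, abs_div, abs_of_pos hden]
  gcongr

lemma summable_norm_gg : Summable (fun d : ℕ => ‖gg d‖) := by
  have hbound : Summable (fun d : ℕ => 2 * ((d : ℝ) ^ (3/2 : ℝ))⁻¹) :=
    (Real.summable_nat_rpow_inv.mpr (by norm_num)).mul_left 2
  refine Summable.of_nonneg_of_le (fun d => norm_nonneg _) (fun d => ?_) hbound
  rcases eq_or_ne d 0 with rfl | hd
  · simp [gg, chi]
  · have hd1 : (1 : ℝ) ≤ d := by exact_mod_cast Nat.one_le_iff_ne_zero.mpr hd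
    have hφ : 0 < Nat.totient d := Nat.totient_pos.mpr (Nat.pos_of_ne_zero hd)
    have hφR : (0 : ℝ) < Nat.totient d := by exact_mod_cast hφ
    have hdR : (0 : ℝ) < d := by linarith
    have hsqrt : Real.sqrt d ≤ 2 * Nat.totient d := by
      have h1 : (d : ℝ) ≤ (2 * Nat.totient d) ^ 2 := by
        have := nat_le_two_totient_sq d
        have : (d : ℝ) ≤ 2 * (Nat.totient d : ℝ) ^ 2 := by exact_mod_cast this
        nlinarith
      calc Real.sqrt d ≤ Real.sqrt ((2 * Nat.totient d) ^ 2) := Real.sqrt_le_sqrt h1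
        _ = 2 * Nat.totient d := Real.sqrt_sq (by positivity)
    have hrpow : (d : ℝ) ^ (3/2 : ℝ) = d * Real.sqrt d := by
      rw [show (3/2 : ℝ) = 1 + 1/2 by norm_num, Real.rpow_add hdR, Real.rpow_one,
        ← Real.sqrt_eq_rpow]
    have key : (d : ℝ) ^ (3/2 : ℝ) ≤ 2 * ((d : ℝ) * Nat.totient d) := by
      rw [hrpow]
      calc (d : ℝ) * Real.sqrt d ≤ (d : ℝ) * (2 * Nat.totient d) :=
            mul_le_mul_of_nonneg_left hsqrt (le_of_lt hdR)
        _ = 2 * ((d : ℝ) * Nat.totient d) := by ring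
    have hXpos : (0 : ℝ) < (d : ℝ) * Nat.totient d := by positivity
    have hYpos : (0 : ℝ) < (d : ℝ) ^ (3/2 : ℝ) := Real.rpow_pos_of_pos hdR _
    calc ‖gg d‖ ≤ 1 / ((d : ℝ) * Nat.totient d) := gg_norm_le d hd
      _ ≤ 2 * ((d : ℝ) ^ (3/2 : ℝ))⁻¹ := by
          rw [← div_eq_mul_inv (2:ℝ), div_le_div_iff₀ hXpos hYpos]
          linarith

open ArithmeticFunction in
def f1 : ArithmeticFunction ℝ :=
  ⟨fun d => ((moebius d : ℤ) : ℝ) ^ 2 / (Nat.totient d : ℝ), by simp⟩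

def g2 : ArithmeticFunction ℝ := ⟨fun n => (n : ℝ) / (Nat.totient n : ℝ), by simp⟩

lemma f1_apply (d : ℕ) :
    f1 d = ((ArithmeticFunction.moebius d : ℤ) : ℝ) ^ 2 / (Nat.totient d : ℝ) := rfl

lemma g2_apply (n : ℕ) : g2 n = (n : ℝ) / (Nat.totient n : ℝ) := rfl

open ArithmeticFunction in
lemma f1_mult : f1.IsMultiplicative := by
  refine ⟨?_, fun {m n} h => ?_⟩
  · simp [f1_apply]
  · rw [f1_apply, f1_apply, f1_apply, isMultiplicative_moebius.map_mul_of_coprime h,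
      Nat.totient_mul h]
    push_cast
    ring

lemma g2_mult : g2.IsMultiplicative := by
  refine ⟨?_, fun {m n} h => ?_⟩
  · simp [g2_apply]
  · rw [g2_apply, g2_apply, g2_apply, Nat.totient_mul h]
    push_cast
    ring

open ArithmeticFunction in
lemma divisor_sum_eq (b : ℕ) (hb : b ≠ 0) :
    ∑ d ∈ b.divisors, ((moebius d : ℤ) : ℝ) ^ 2 / (Nat.totient d : ℝ)
      = (b : ℝ) / (Nat.totient b : ℝ) := by
  have hmz : (f1 * (zeta : ArithmeticFunction ℝ)).IsMultiplicative := f1_mult.mul isMultiplicative_zeta.natCast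
  have key : f1 * (zeta : ArithmeticFunction ℝ) = g2 := by
    rw [ArithmeticFunction.IsMultiplicative.eq_iff_eq_on_prime_powers _ hmz _ g2_mult]
    intro p i hp
    rw [coe_mul_zeta_apply, Nat.sum_divisors_prime_pow hp]
    rcases Nat.eq_zero_or_pos i with rfl | hi
    · simp [f1_apply, g2_apply]
    · have hφ : Nat.totient (p ^ i) = p ^ (i - 1) * (p - 1) := Nat.totient_prime_pow hp hi
      obtain ⟨j, rfl⟩ : ∃ j, i = j + 1 := ⟨i - 1, by omega⟩
      rw [Finset.sum_range_succ', Finset.sum_range_succ']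
      have hzero : ∀ x ∈ Finset.range j, f1 (p ^ (x + 1 + 1)) = 0 := by
        intro x _
        rw [f1_apply, moebius_apply_prime_pow hp (by omega)]
        simp
      rw [Finset.sum_congr rfl hzero, Finset.sum_const_zero, zero_add]
      rw [f1_apply, f1_apply, pow_zero, pow_one, g2_apply, hφ,
        moebius_apply_prime hp, ArithmeticFunction.moebius_apply_one,
        Nat.totient_prime hp, Nat.totient_one]
      have hp2 : 2 ≤ p := hp.two_le
      have hc : ((p - 1 : ℕ) : ℝ) = (p : ℝ) - 1 := by
        push_cast [Nat.cast_sub hp.one_le]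
        ring
      have hj1 : j + 1 - 1 = j := by omega
      rw [hj1]
      push_cast [hc]
      have hpR : (2 : ℝ) ≤ p := by exact_mod_cast hp2
      have h1 : (p : ℝ) - 1 ≠ 0 := by linarith
      have h2 : (p : ℝ) ^ j ≠ 0 := by positivity
      field_simp
      ring
  have := congrArg (fun f : ArithmeticFunction ℝ => f b) key
  simp only [coe_mul_zeta_apply] at this
  rw [← g2_apply]
  convert this using 2
  exact (f1_apply _).symm

lemma hyperbola (F : ℕ → ℕ → ℝ) (hF : ∀ d, F d 0 = 0) (N : ℕ) :
    ∑ b ∈ Finset.range N, ∑ x ∈ b.divisorsAntidiagonal, F x.1 x.2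
      = ∑ d ∈ Finset.range N, ∑ m ∈ Finset.range ((N - 1) / d + 1), F d m := by
  have hinner : ∀ d k : ℕ, ∑ m ∈ Finset.range (k + 1), F d m
      = ∑ m ∈ Finset.Ico 1 (k + 1), F d m := by
    intro d k
    rw [Finset.range_eq_Ico, Finset.sum_eq_sum_Ico_succ_bot (by omega), hF, zero_add]
  rw [Finset.sum_congr rfl (fun d _ => hinner d _)]
  rw [Finset.sum_sigma', Finset.sum_sigma']
  refine Finset.sum_nbij' (fun x => ⟨x.2.1, x.2.2⟩) (fun y => ⟨y.1 * y.2, (y.1, y.2)⟩)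
    ?_ ?_ ?_ ?_ ?_
  · rintro ⟨b, d, m⟩ hx
    simp only [Finset.mem_sigma, Finset.mem_range, Nat.mem_divisorsAntidiagonal,
      Finset.mem_Ico] at hx ⊢
    obtain ⟨hbN, hdm, hb0⟩ := hx
    have hd0 : 0 < d := by
      rcases Nat.eq_zero_or_pos d with rfl | h
      · simp at hdm; omega
      · exact h
    have hm0 : 0 < m := by
      rcases Nat.eq_zero_or_pos m with rfl | h
      · simp at hdm; omega
      · exact h
    have hdleb : d ≤ d * m := Nat.le_mul_of_pos_right d hm0
    refine ⟨by omega, hm0, ?_⟩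
    have : m ≤ (N - 1) / d := (Nat.le_div_iff_mul_le hd0).mpr (by rw [Nat.mul_comm]; omega)
    omega
  · rintro ⟨d, m⟩ hy
    simp only [Finset.mem_sigma, Finset.mem_range, Finset.mem_Ico,
      Nat.mem_divisorsAntidiagonal] at hy ⊢
    obtain ⟨hdN, hm1, hm2⟩ := hy
    have hd0 : 0 < d := by
      rcases Nat.eq_zero_or_pos d with rfl | h
      · rw [Nat.div_zero] at hm2; omega
      · exact h
    have hmul : d * m ≤ N - 1 := by
      have := (Nat.le_div_iff_mul_le hd0).mp (by omega : m ≤ (N - 1) / d)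
      rw [Nat.mul_comm] at this
      omega
    exact ⟨by omega, trivial, by positivity⟩
  · rintro ⟨b, d, m⟩ hx
    simp only [Finset.mem_sigma, Nat.mem_divisorsAntidiagonal] at hx
    simp only
    ext <;> simp [hx.2.1]
  · rintro ⟨d, m⟩ _
    rfl
  · rintro ⟨b, d, m⟩ _
    rfl

def AA (N : ℕ) : ℝ := ∑ m ∈ Finset.range N, chi m / m

lemma AA_eq (N : ℕ) : AA N = ∑ i ∈ Finset.range (N / 2), (-1 : ℝ) ^ i / (2 * i + 1) := by
  induction N with
  | zero => simp [AA]
  | succ n ih =>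
    rw [AA, Finset.sum_range_succ, ← AA, ih]
    rcases Nat.even_or_odd n with he | ho
    · have h0 : chi n = 0 := by
        obtain ⟨t, ht⟩ := he
        simp only [chi]
        rw [if_neg (by omega), if_neg (by omega)]
      have h2 : (n + 1) / 2 = n / 2 := by obtain ⟨t, ht⟩ := he; omega
      rw [h0, h2, zero_div, add_zero]
    · obtain ⟨k, hk⟩ := ho
      have h2 : (n + 1) / 2 = n / 2 + 1 := by omega
      have h3 : n / 2 = k := by omega
      rw [h2, h3, Finset.sum_range_succ]
      congr 1
      have hcast : (n : ℝ) = 2 * k + 1 := by exact_mod_cast congrArg Nat.cast hk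
      rcases Nat.even_or_odd k with hek | hok
      · have hchi : chi n = 1 := by
          obtain ⟨t, ht⟩ := hek
          simp only [chi]
          rw [if_pos (by omega)]
        rw [hchi, hek.neg_one_pow, hcast]
      · have hchi : chi n = -1 := by
          obtain ⟨t, ht⟩ := hok
          simp only [chi]
          rw [if_neg (by omega), if_pos (by omega)]
        rw [hchi, hok.neg_one_pow, hcast]

lemma AA_tendsto : Tendsto AA atTop (nhds (Real.pi / 4)) := by
  have hdiv : Tendsto (fun N : ℕ => N / 2) atTop atTop :=
    tendsto_atTop_atTop.mpr fun b => ⟨2 * b, fun a ha => by omega⟩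
  exact (Real.tendsto_sum_pi_div_four.comp hdiv).congr fun N => (AA_eq N).symm

open ArithmeticFunction in
lemma perb (b : ℕ) : chi b / (Nat.totient b : ℝ)
    = ∑ x ∈ b.divisorsAntidiagonal, gg x.1 * (chi x.2 / x.2) := by
  rcases eq_or_ne b 0 with rfl | hb
  · simp [chi]
  · rw [Nat.sum_divisorsAntidiagonal (f := fun d m => gg d * (chi m / m))]
    have hterm : ∀ d ∈ b.divisors, gg d * (chi (b / d) / ((b / d : ℕ) : ℝ))
        = ((moebius d : ℤ) : ℝ) ^ 2 / (Nat.totient d : ℝ) * (chi b / b) := by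
      intro d hd
      obtain ⟨hdvd, _⟩ := Nat.mem_divisors.mp hd
      have hmulnat : d * (b / d) = b := Nat.mul_div_cancel' hdvd
      have hchi : chi d * chi (b / d) = chi b := by rw [← chi_mul, hmulnat]
      have hcast : (d : ℝ) * ((b / d : ℕ) : ℝ) = b := by
        exact_mod_cast congrArg (Nat.cast : ℕ → ℝ) hmulnat
      calc gg d * (chi (b / d) / ((b / d : ℕ) : ℝ))
          = ((moebius d : ℤ) : ℝ) ^ 2 / (Nat.totient d : ℝ) *
              ((chi d * chi (b / d)) / ((d : ℝ) * ((b / d : ℕ) : ℝ))) := by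
            rw [gg]; ring
        _ = _ := by rw [hchi, hcast]
    rw [Finset.sum_congr rfl hterm, ← Finset.sum_mul, divisor_sum_eq b hb]
    have hb0 : (b : ℝ) ≠ 0 := Nat.cast_ne_zero.mpr hb
    have hφ0 : (Nat.totient b : ℝ) ≠ 0 :=
      Nat.cast_ne_zero.mpr (Nat.totient_pos.mpr (Nat.pos_of_ne_zero hb)).ne'
    field_simp

theorem sum_chi_div_totient :
    ∃ c₁ L : ℝ,
      Tendsto (fun N : ℕ => ∑ b ∈ Finset.range N, chi b / (Nat.totient b : ℝ))
        atTop (nhds c₁) ∧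
      Tendsto (fun N : ℕ => ∑ n ∈ Finset.range N, chi n / (n : ℝ)) atTop (nhds L) ∧
      Multipliable (fun p : Nat.Primes =>
        1 + chi p / (((p : ℕ) : ℝ) * (((p : ℕ) : ℝ) - 1))) ∧
      c₁ = L * ∏' p : Nat.Primes,
        (1 + chi p / (((p : ℕ) : ℝ) * (((p : ℕ) : ℝ) - 1))) := by
  have hsum := summable_norm_gg
  -- Euler product
  have heuler : HasProd (fun p : Nat.Primes => ∑' e : ℕ, gg ((p : ℕ) ^ e)) (∑' n, gg n) :=
    EulerProduct.eulerProduct_hasProd gg_one (fun {m n} h => gg_mul h) hsum gg_zero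
  have hE : (fun p : Nat.Primes => ∑' e : ℕ, gg ((p : ℕ) ^ e))
      = fun p : Nat.Primes => 1 + chi p / (((p : ℕ) : ℝ) * (((p : ℕ) : ℝ) - 1)) := by
    funext p
    have hp : (p : ℕ).Prime := p.2
    have hzero : ∀ e : ℕ, e ∉ ({0, 1} : Finset ℕ) → gg ((p : ℕ) ^ e) = 0 := by
      intro e he
      simp only [Finset.mem_insert, Finset.mem_singleton] at he
      push_neg at he
      rw [gg, ArithmeticFunction.moebius_apply_prime_pow hp (by omega),
        if_neg (by omega)]
      simp
    rw [tsum_eq_sum hzero, Finset.sum_insert (by norm_num), Finset.sum_singleton,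
      pow_zero, pow_one, gg_one]
    congr 1
    rw [gg, ArithmeticFunction.moebius_apply_prime hp, Nat.totient_prime hp]
    have hc : (((p : ℕ) - 1 : ℕ) : ℝ) = ((p : ℕ) : ℝ) - 1 := by
      push_cast [Nat.cast_sub hp.one_le]
      ring
    rw [hc]
    norm_num
  rw [hE] at heuler
  -- boundedness of partial sums of L-series
  obtain ⟨C, hC⟩ := (AA_tendsto.abs).bddAbove_range
  have hCb : ∀ k, |AA k| ≤ C := fun k => hC ⟨k, rfl⟩
  have hC0 : (0 : ℝ) ≤ C := (abs_nonneg _).trans (hCb 0)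
  -- the partial-sum identity
  have hTN : ∀ N : ℕ, (∑ b ∈ Finset.range N, chi b / (Nat.totient b : ℝ))
      = ∑' d : ℕ, (if d < N then gg d * AA ((N - 1) / d + 1) else 0) := by
    intro N
    have h1 : ∀ b ∈ Finset.range N, chi b / (Nat.totient b : ℝ)
        = ∑ x ∈ b.divisorsAntidiagonal, gg x.1 * (chi x.2 / x.2) := fun b _ => perb b
    rw [Finset.sum_congr rfl h1,
      hyperbola (fun d m => gg d * (chi m / m)) (fun d => by simp [chi]) N,
      tsum_eq_sum (s := Finset.range N)
        (fun d hd => if_neg fun h => hd (Finset.mem_range.mpr h))]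
    refine Finset.sum_congr rfl fun d hd => ?_
    rw [if_pos (Finset.mem_range.mp hd), AA, Finset.mul_sum]
  -- dominated convergence
  have hmain : Tendsto
      (fun N : ℕ => ∑' d : ℕ, (if d < N then gg d * AA ((N - 1) / d + 1) else 0))
      atTop (nhds (∑' d : ℕ, gg d * (Real.pi / 4))) := by
    apply tendsto_tsum_of_dominated_convergence (bound := fun d => ‖gg d‖ * C)
    · exact hsum.mul_right C
    · intro d
      rcases eq_or_ne d 0 with rfl | hd
      · rw [gg_zero, zero_mul]
        have hfun : ∀ N : ℕ, (if 0 < N then (0 : ℝ) * AA ((N - 1) / 0 + 1) else 0) = (0 : ℝ) := by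
          intro N; split <;> simp
        simpa only [hfun] using
          (tendsto_const_nhds : Tendsto (fun _ : ℕ => (0 : ℝ)) atTop (nhds 0))
      · have hd0 : 0 < d := Nat.pos_of_ne_zero hd
        have hcomp : Tendsto (fun N : ℕ => (N - 1) / d + 1) atTop atTop := by
          refine tendsto_atTop_atTop.mpr fun b => ⟨d * b + 1, fun a ha => ?_⟩
          have h1 : (b - 1) * d ≤ a - 1 := by
            calc (b - 1) * d ≤ b * d := Nat.mul_le_mul_right d (by omega)
              _ ≤ a - 1 := by rw [Nat.mul_comm]; omega
          have := (Nat.le_div_iff_mul_le hd0).mpr h1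
          omega
        have hlim : Tendsto (fun N : ℕ => gg d * AA ((N - 1) / d + 1)) atTop
            (nhds (gg d * (Real.pi / 4))) := (AA_tendsto.comp hcomp).const_mul (gg d)
        refine hlim.congr' ?_
        filter_upwards [eventually_ge_atTop (d + 1)] with N hN
        rw [if_pos (by omega)]
    · apply Filter.Eventually.of_forall
      intro N d
      split
      · rw [norm_mul]
        have h : ‖AA ((N - 1) / d + 1)‖ ≤ C := by rw [Real.norm_eq_abs]; exact hCb _
        exact mul_le_mul_of_nonneg_left h (norm_nonneg _)
      · simpa using mul_nonneg (norm_nonneg (gg d)) hC0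
  refine ⟨(∑' d, gg d) * (Real.pi / 4), Real.pi / 4, ?_, AA_tendsto, heuler.multipliable, ?_⟩
  · have h := hmain.congr fun N => (hTN N).symm
    rwa [tsum_mul_right] at h
  · rw [heuler.tprod_eq]
    ring
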